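/- Let f : ℂ → ℂ be holomorphic on {s : Re s > 0}, continuous up to the boundary away from a finite set of points s₁, …, s_k on the imaginary axis, and suppose f is given on {Re s > σ₀} by an absolutely convergent Laplace transform f(s) = ∫₀^∞ g(t)e^{-st} dt of a continuous function g. If moreover f extends holomorphically across every boundary point except the s_j, and g(t) = Σ_j q_j(t)e^{s_j t} + h(t) with polynomials q_j and rapidly decreasing h, then: g(t) → 0 as t → ∞ implies all q_j = 0. -/

import Mathlib

open Filter Complex Finset Topology

private lemma aux_cesaro (u : ℝ → ℂ) (hu : Continuous u)
    (h0 : Tendsto u atTop (𝓝 0)) :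
    Tendsto (fun n : ℕ => ((n : ℝ))⁻¹ • ∫ t in (0:ℝ)..(n:ℝ), u t) atTop (𝓝 0) := by
  set a : ℕ → ℂ := fun n => ∫ t in (n:ℝ)..((n:ℝ)+1), u t with ha
  have hsum : ∀ n : ℕ, (∫ t in (0:ℝ)..(n:ℝ), u t) = ∑ i ∈ range n, a i := by
    intro n
    have key := intervalIntegral.sum_integral_adjacent_intervals
      (a := fun i : ℕ => (i:ℝ)) (n := n) (μ := MeasureTheory.volume)
      (fun i _ => hu.intervalIntegrable _ _)
    simp only [Nat.cast_zero] at key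
    rw [← key]
    simp [ha]
  have hazero : Tendsto a atTop (𝓝 0) := by
    rw [Metric.tendsto_atTop] at h0 ⊢
    intro ε hε
    obtain ⟨M, hM⟩ := h0 (ε/2) (by positivity)
    obtain ⟨N, hN⟩ := exists_nat_ge M
    refine ⟨N, fun n hn => ?_⟩
    have hb : ‖a n‖ ≤ (ε/2) * |((n:ℝ)+1) - (n:ℝ)| := by
      refine intervalIntegral.norm_integral_le_of_norm_le_const ?_
      intro x hx
      rw [Set.uIoc_of_le (by linarith)] at hx
      have hMx : M ≤ x := by
        have : (N:ℝ) ≤ (n:ℝ) := by exact_mod_cast hn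
        have := hx.1
        linarith
      have := hM x hMx
      rw [dist_zero_right] at this
      exact this.le
    rw [dist_zero_right]
    have : |((n:ℝ)+1) - (n:ℝ)| = 1 := by simp
    rw [this, mul_one] at hb
    linarith
  have hc := hazero.cesaro_smul
  refine hc.congr (fun n => ?_)
  rw [hsum n]

private lemma aux_char {k : ℕ} (s : Fin k → ℂ) (hs : Function.Injective s)
    (hre : ∀ j, (s j).re = 0) (c : Fin k → ℂ)
    (hlim : Tendsto (fun t : ℝ => ∑ j, c j * Complex.exp (s j * t)) atTop (𝓝 0)) :
    ∀ l, c l = 0 := by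
  intro l
  set u : ℝ → ℂ := fun t => ∑ j, c j * Complex.exp ((s j - s l) * t) with hud
  have hexp1 : ∀ (z : ℂ), z.re = 0 → ∀ t : ℝ, ‖Complex.exp (z * t)‖ = 1 := by
    intro z hz t
    rw [Complex.norm_exp]
    simp [Complex.mul_re, hz]
  have hnorm : ∀ t : ℝ, ‖u t‖ = ‖∑ j, c j * Complex.exp (s j * t)‖ := by
    intro t
    have he : u t = (∑ j, c j * Complex.exp (s j * t)) * Complex.exp (-(s l) * t) := by
      rw [Finset.sum_mul, hud]
      refine Finset.sum_congr rfl fun j _ => ?_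
      rw [mul_assoc, ← Complex.exp_add]
      ring_nf
    rw [he, norm_mul, hexp1 (-(s l)) (by simp [hre l]) t, mul_one]
  have hu0 : Tendsto u atTop (𝓝 0) := by
    rw [tendsto_zero_iff_norm_tendsto_zero] at hlim ⊢
    exact hlim.congr fun t => (hnorm t).symm
  have hucont : Continuous u := by
    apply continuous_finset_sum
    intro j _
    exact continuous_const.mul (Complex.continuous_exp.comp (by continuity))
  have hA := aux_cesaro u hucont hu0
  have hint : ∀ n : ℕ, (∫ t in (0:ℝ)..(n:ℝ), u t)
      = (c l) * n + ∑ j ∈ Finset.univ.erase l,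
          c j * ((Complex.exp ((s j - s l) * n) - 1) / (s j - s l)) := by
    intro n
    have : (∫ t in (0:ℝ)..(n:ℝ), u t)
        = ∑ j, ∫ t in (0:ℝ)..(n:ℝ), c j * Complex.exp ((s j - s l) * t) := by
      rw [hud]
      rw [intervalIntegral.integral_finset_sum]
      intro j _
      exact (continuous_const.mul
        (Complex.continuous_exp.comp (by continuity))).intervalIntegrable _ _
    rw [this, ← Finset.sum_erase_add _ _ (Finset.mem_univ l), add_comm]
    congr 1
    · rw [intervalIntegral.integral_const_mul]
      have hll : s l - s l = 0 := sub_self _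
      simp [hll]
    · refine Finset.sum_congr rfl fun j hj => ?_
      rw [intervalIntegral.integral_const_mul, integral_exp_mul_complex
        (sub_ne_zero.2 (fun hc => (Finset.mem_erase.1 hj).1 (hs hc)))]
      norm_num
  have hB : Tendsto (fun n : ℕ => ((n:ℝ))⁻¹ • (∑ j ∈ Finset.univ.erase l,
      c j * ((Complex.exp ((s j - s l) * n) - 1) / (s j - s l)))) atTop (𝓝 0) := by
    rw [tendsto_zero_iff_norm_tendsto_zero]
    set D : ℝ := ∑ j ∈ Finset.univ.erase l, ‖c j‖ * (2 / ‖s j - s l‖) with hD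
    have hDn : 0 ≤ D := Finset.sum_nonneg fun j _ => by positivity
    apply squeeze_zero (fun n => norm_nonneg _) (g := fun n : ℕ => ((n:ℝ))⁻¹ * D)
    · intro n
      rw [norm_smul, norm_inv, Real.norm_natCast]
      gcongr
      refine (norm_sum_le _ _).trans ?_
      rw [hD]
      refine Finset.sum_le_sum fun j hj => ?_
      rw [norm_mul, norm_div]
      gcongr
      calc ‖Complex.exp ((s j - s l) * n) - 1‖
          ≤ ‖Complex.exp ((s j - s l) * n)‖ + ‖(1:ℂ)‖ := norm_sub_le _ _
        _ ≤ 2 := by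
            have h1 := hexp1 (s j - s l) (by simp [hre j, hre l]) n
            push_cast at h1 ⊢
            rw [h1]
            norm_num
    · simpa using ((tendsto_inv_atTop_nhds_zero_nat (𝕜 := ℝ)).mul_const D)
  have hC : Tendsto (fun n : ℕ => ((n:ℝ))⁻¹ • ∫ t in (0:ℝ)..(n:ℝ), u t)
      atTop (𝓝 (c l)) := by
    have : Tendsto (fun n : ℕ => c l + ((n:ℝ))⁻¹ • (∑ j ∈ Finset.univ.erase l,
        c j * ((Complex.exp ((s j - s l) * n) - 1) / (s j - s l)))) atTop (𝓝 (c l + 0)) :=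
      tendsto_const_nhds.add hB
    rw [add_zero] at this
    refine this.congr' ?_
    filter_upwards [Filter.eventually_ge_atTop 1] with n hn
    rw [hint n, smul_add]
    congr 1
    have hn0 : ((n:ℂ)) ≠ 0 := by
      have : n ≠ 0 := by omega
      exact_mod_cast this
    rw [Complex.real_smul]
    push_cast
    field_simp
  exact (tendsto_nhds_unique hA hC).symm

private lemma aux_exp_norm (z : ℂ) (hz : z.re = 0) (t : ℝ) :
    ‖Complex.exp (z * t)‖ = 1 := by
  rw [Complex.norm_exp]
  simp [Complex.mul_re, hz]

private lemma aux_poly {N : ℕ} (p : Polynomial ℂ) (hdeg : p.natDegree ≤ N)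
    (hco : p.coeff N = 0) :
    Tendsto (fun t : ℝ => p.eval (t:ℂ) / (t:ℂ)^N) atTop (𝓝 0) := by
  have heval : ∀ t : ℝ, p.eval (t:ℂ) / (t:ℂ)^N
      = ∑ i ∈ Finset.range N, p.coeff i * ((t:ℂ)^i / (t:ℂ)^N) := by
    intro t
    rw [Polynomial.eval_eq_sum_range' (Nat.lt_succ_of_le hdeg)]
    rw [Finset.sum_range_succ, hco, zero_mul, add_zero, Finset.sum_div]
    exact Finset.sum_congr rfl fun i _ => (mul_div_assoc _ _ _)
  have hterm : ∀ i ∈ Finset.range N,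
      Tendsto (fun t : ℝ => p.coeff i * ((t:ℂ)^i / (t:ℂ)^N)) atTop (𝓝 0) := by
    intro i hi
    have hi' : i < N := Finset.mem_range.1 hi
    have h2 : Tendsto (fun t : ℝ => t^i / t^N) atTop (𝓝 0) :=
      tendsto_pow_div_pow_atTop_zero hi'
    have h3 := (Complex.continuous_ofReal.tendsto 0).comp h2
    simp only [Complex.ofReal_zero] at h3
    have h1 : Tendsto (fun t : ℝ => ((t:ℂ)^i / (t:ℂ)^N)) atTop (𝓝 0) := by
      refine h3.congr fun t => ?_
      simp only [Function.comp_apply]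
      push_cast
      rfl
    simpa using h1.const_mul (p.coeff i)
  have := tendsto_finset_sum (Finset.range N) hterm
  rw [Finset.sum_const_zero] at this
  exact this.congr fun t => (heval t).symm

/-- If `g(t) = ∑_j q_j(t) e^{s_j t} + h(t)` with pairwise distinct purely
imaginary exponents `s_j`, polynomials `q_j` and a rapidly decreasing `h`, and
`g(t) → 0` as `t → ∞`, then all the polynomials `q_j` vanish. -/
theorem stmt19 {k : ℕ} (s : Fin k → ℂ) (hs : Function.Injective s)
    (hre : ∀ j, (s j).re = 0)
    (q : Fin k → Polynomial ℂ) (h : ℝ → ℂ)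
    (hcont : ContinuousOn h (Set.Ici 0))
    (hdec : ∀ n : ℕ, ∃ C : ℝ, ∀ t : ℝ, 0 ≤ t → t ^ n * ‖h t‖ ≤ C)
    (g : ℝ → ℂ)
    (hg : ∀ t : ℝ, g t = ∑ j, (q j).eval (t : ℂ) * Complex.exp (s j * t) + h t)
    (hlim : Filter.Tendsto g Filter.atTop (nhds 0)) :
    ∀ j, q j = 0 := by
  have hh0 : Tendsto h atTop (𝓝 0) := by
    obtain ⟨C, hC⟩ := hdec 1
    rw [tendsto_zero_iff_norm_tendsto_zero]
    refine squeeze_zero' (g := fun t : ℝ => C / t)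
      (Filter.Eventually.of_forall fun t => norm_nonneg _) ?_
      (tendsto_const_nhds.div_atTop tendsto_id)
    filter_upwards [Filter.eventually_gt_atTop (0:ℝ)] with t ht
    have h1 := hC t ht.le
    rw [pow_one] at h1
    rw [le_div_iff₀ ht]
    linarith
  have hF : Tendsto (fun t : ℝ => ∑ i, (q i).eval (t:ℂ) * Complex.exp (s i * t))
      atTop (𝓝 0) := by
    have h2 := hlim.sub hh0
    rw [sub_zero] at h2
    exact h2.congr fun t => by rw [hg t]; ring
  intro j
  by_contra hqj
  set S := Finset.univ.filter (fun i => q i ≠ 0) with hS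
  have hjS : j ∈ S := by simp [hS, hqj]
  set N := S.sup (fun i => (q i).natDegree) with hN
  have hdegle : ∀ i, (q i).natDegree ≤ N := by
    intro i
    by_cases hi : q i = 0
    · simp [hi]
    · exact Finset.le_sup (f := fun i => (q i).natDegree) (Finset.mem_filter.2 ⟨Finset.mem_univ i, hi⟩)
  obtain ⟨j₁, hj₁S, hj₁⟩ := Finset.exists_mem_eq_sup S ⟨j, hjS⟩ (fun i => (q i).natDegree)
  have hqj₁ : q j₁ ≠ 0 := by simpa [hS] using hj₁S
  set c : Fin k → ℂ := fun i => (q i).coeff N with hc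
  have hcj₁ : c j₁ ≠ 0 := by
    have hNeq : N = (q j₁).natDegree := hj₁
    show (q j₁).coeff N ≠ 0
    rw [hNeq]
    exact Polynomial.leadingCoeff_ne_zero.2 hqj₁
  set r : Fin k → Polynomial ℂ :=
    fun i => q i - Polynomial.C (c i) * Polynomial.X ^ N with hr
  have hrdeg : ∀ i, (r i).natDegree ≤ N := by
    intro i
    refine (Polynomial.natDegree_sub_le _ _).trans ?_
    exact max_le (hdegle i) ((Polynomial.natDegree_C_mul_le _ _).trans
      (by simp [Polynomial.natDegree_X_pow]))
  have hrco : ∀ i, (r i).coeff N = 0 := by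
    intro i
    simp [hr, hc, Polynomial.coeff_C_mul, Polynomial.coeff_X_pow]
  have hterm1 : Tendsto (fun t : ℝ =>
      (∑ i, (q i).eval (t:ℂ) * Complex.exp (s i * t)) / (t:ℂ)^N) atTop (𝓝 0) := by
    rw [tendsto_zero_iff_norm_tendsto_zero]
    refine squeeze_zero'
      (Filter.Eventually.of_forall fun t => norm_nonneg _) ?_
      (tendsto_zero_iff_norm_tendsto_zero.1 hF)
    filter_upwards [Filter.eventually_ge_atTop (1:ℝ)] with t ht
    rw [norm_div]
    have h1 : (1:ℝ) ≤ ‖((t:ℂ))^N‖ := by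
      rw [norm_pow]
      refine one_le_pow₀ ?_
      rw [Complex.norm_real]
      exact ht.trans (le_abs_self t)
    calc ‖∑ i, (q i).eval (t:ℂ) * Complex.exp (s i * t)‖ / ‖((t:ℂ))^N‖
        ≤ ‖∑ i, (q i).eval (t:ℂ) * Complex.exp (s i * t)‖ / 1 := by gcongr
      _ = _ := div_one _
  have hterm2 : Tendsto (fun t : ℝ =>
      ∑ i, ((r i).eval (t:ℂ) / (t:ℂ)^N) * Complex.exp (s i * t)) atTop (𝓝 0) := by
    have h4 : ∀ i ∈ Finset.univ, Tendsto (fun t : ℝ =>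
        ((r i).eval (t:ℂ) / (t:ℂ)^N) * Complex.exp (s i * t)) atTop (𝓝 0) := by
      intro i _
      have h0 := aux_poly (r i) (hrdeg i) (hrco i)
      rw [tendsto_zero_iff_norm_tendsto_zero] at h0 ⊢
      refine h0.congr fun t => ?_
      rw [norm_mul, aux_exp_norm (s i) (hre i) t, mul_one]
    have := tendsto_finset_sum Finset.univ h4
    simpa using this
  have hP : Tendsto (fun t : ℝ => ∑ i, c i * Complex.exp (s i * t)) atTop (𝓝 0) := by
    have h5 := hterm1.sub hterm2
    rw [sub_zero] at h5
    refine h5.congr' ?_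
    filter_upwards [Filter.eventually_ge_atTop (1:ℝ)] with t ht
    have htC : ((t:ℂ))^N ≠ 0 :=
      pow_ne_zero _ (by exact_mod_cast (by linarith : (0:ℝ) < t).ne')
    rw [Finset.sum_div, ← Finset.sum_sub_distrib]
    refine Finset.sum_congr rfl fun i _ => ?_
    have hri : (r i).eval (t:ℂ) = (q i).eval (t:ℂ) - c i * (t:ℂ)^N := by
      simp [hr]
    rw [hri]
    field_simp
    ring
  exact hcj₁ (aux_char s hs hre c hP j₁)
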